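/- (Best-response form of the ADO termination criterion.) Let A : S₁ × S₂ → ℝ be the payoff matrix of a finite two-player zero-sum game and let T₁ ⊆ S₁, T₂ ⊆ S₂ be nonempty. Let x^r ∈ Δ(T₁) attain max_{x∈Δ(T₁)} min_{y∈Δ(S₂)} v(x,y) and let y^r ∈ Δ(T₂) attain min_{y∈Δ(T₂)} max_{x∈Δ(S₁)} v(x,y). If every pure strategy a ∈ S₁ that is a best response to y^r (i.e., attains max_{x∈Δ(S₁)} v(x, y^r)) lies in T₁, and every pure strategy b ∈ S₂ that is a best response to x^r (i.e., attains min_{y∈Δ(S₂)} v(x^r, y)) lies in T₂, then (x^r, y^r) is a Nash equilibrium of the full game. -/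

import Mathlib

open scoped Pointwise


open scoped BigOperators

/-- The set of mixed strategies over a finite action set `S`. -/
def mixed (S : Type*) [Fintype S] : Set (S → ℝ) :=
  {x | (∀ a, 0 ≤ x a) ∧ ∑ a, x a = 1}

/-- Mixed strategies supported in a subset `T` of the action set. -/
def mixedOn {S : Type*} [Fintype S] (T : Set S) : Set (S → ℝ) :=
  {x | x ∈ mixed S ∧ ∀ a ∉ T, x a = 0}

/-- Expected payoff to player 1: `v(x,y) = ∑ x(a) A(a,b) y(b)`. -/
def payoff {S₁ S₂ : Type*} [Fintype S₁] [Fintype S₂]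
    (A : S₁ → S₂ → ℝ) (x : S₁ → ℝ) (y : S₂ → ℝ) : ℝ :=
  ∑ a, ∑ b, x a * A a b * y b

/-- `min_{y ∈ Δ(S₂)} v(x,y)`, the value of player 1's strategy `x`
against a best-responding opponent. -/
noncomputable def minVal {S₁ S₂ : Type*} [Fintype S₁] [Fintype S₂]
    (A : S₁ → S₂ → ℝ) (x : S₁ → ℝ) : ℝ :=
  sInf (payoff A x '' mixed S₂)

/-- `max_{x ∈ Δ(S₁)} v(x,y)`, the value of a best response against
player 2's strategy `y`. -/
noncomputable def maxVal {S₁ S₂ : Type*} [Fintype S₁] [Fintype S₂]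
    (A : S₁ → S₂ → ℝ) (y : S₂ → ℝ) : ℝ :=
  sSup ((fun x => payoff A x y) '' mixed S₁)

/-- Exploitability of the profile `(x,y)`:
`e(x,y) = max_{x'} v(x',y) - min_{y'} v(x,y')`. -/
noncomputable def exploit {S₁ S₂ : Type*} [Fintype S₁] [Fintype S₂]
    (A : S₁ → S₂ → ℝ) (x : S₁ → ℝ) (y : S₂ → ℝ) : ℝ :=
  maxVal A y - minVal A x

/-- The mixed strategy placing probability 1 on the pure strategy `a`. -/
def pureStrat {S : Type*} [DecidableEq S] (a : S) : S → ℝ :=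
  fun b => if b = a then 1 else 0

lemma minimax_dichotomy {α β : Type*} [Fintype α] [Fintype β] [Nonempty α] [Nonempty β]
    [DecidableEq α] [DecidableEq β] (B : α → β → ℝ) (c : ℝ) :
    (∃ y ∈ stdSimplex ℝ β, ∀ a : α, ∑ b, B a b * y b ≤ c) ∨
    (∃ x ∈ stdSimplex ℝ α, ∀ b : β, c < ∑ a, x a * B a b) := by
  classical
  set L : (β → ℝ) →ₗ[ℝ] (α → ℝ) :=
    { toFun := fun y a => ∑ b, B a b * y b
      map_add' := by
        intro y z; funext a
        simp [mul_add, Finset.sum_add_distrib]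
      map_smul' := by
        intro t y; funext a
        simp [Finset.mul_sum]
        exact Finset.sum_congr rfl fun b _ => by ring } with hL
  set O : Set (α → ℝ) := {z | ∀ a, 0 ≤ z a} with hO
  set K : Set (α → ℝ) := (L '' stdSimplex ℝ β) + O with hK
  have hOpi : O = Set.univ.pi fun _ : α => Set.Ici (0:ℝ) := by
    ext z; simp only [hO, Set.mem_setOf_eq, Set.mem_pi, Set.mem_univ, Set.mem_Ici,
      forall_true_left]
  have hOconv : Convex ℝ O := by
    rw [hOpi]; exact convex_pi fun i _ => convex_Ici 0
  have hKconv : Convex ℝ K := ((convex_stdSimplex ℝ β).linear_image L).add hOconv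
  have hLcont : Continuous L := by
    apply continuous_pi
    intro a
    exact continuous_finset_sum _ fun b _ => continuous_const.mul (continuous_apply b)
  have hOclosed : IsClosed O := by
    rw [hOpi]; exact isClosed_set_pi fun i _ => isClosed_Ici
  have hKclosed : IsClosed K :=
    hOclosed.add_left_of_isCompact ((isCompact_stdSimplex ℝ β).image hLcont)
  by_cases hc : (fun _ : α => c) ∈ K
  · left
    obtain ⟨w, hw, z, hz, hwz⟩ := Set.mem_add.mp hc
    obtain ⟨y, hy, rfl⟩ := hw
    refine ⟨y, hy, fun a => ?_⟩
    have h1 := congrFun hwz a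
    have hza : 0 ≤ z a := hz a
    simp only [Pi.add_apply] at h1
    have h2 : (∑ b, B a b * y b) + z a = c := h1
    linarith
  · right
    obtain ⟨f, u, hfc, hfK⟩ := geometric_hahn_banach_point_closed hKconv hKclosed hc
    set g : α → ℝ := fun a => f (fun j => if a = j then (1:ℝ) else 0) with hg
    have hfz : ∀ z : α → ℝ, f z = ∑ a, z a * g a := by
      intro z
      conv_lhs => rw [pi_eq_sum_univ z]
      rw [map_sum]
      exact Finset.sum_congr rfl fun a _ => by rw [map_smul]; simp [hg, smul_eq_mul]
    obtain ⟨b₀⟩ := ‹Nonempty β›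
    have hδ : ∀ b : β, (fun j => if b = j then (1:ℝ) else 0) ∈ stdSimplex ℝ β :=
      fun b => ite_eq_mem_stdSimplex ℝ b
    have hwK : ∀ b : β, L (fun j => if b = j then (1:ℝ) else 0) ∈ K := by
      intro b
      have h0 : (0 : α → ℝ) ∈ O := fun _ => le_rfl
      have := Set.add_mem_add (Set.mem_image_of_mem L (hδ b)) h0
      simpa using this
    have hLδ : ∀ b : β, L (fun j => if b = j then (1:ℝ) else 0) = fun a => B a b := by
      intro b; funext a
      simp [hL, mul_ite]
    -- nonnegativity of g
    have hg0 : ∀ a, 0 ≤ g a := by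
      intro a
      by_contra hneg
      push_neg at hneg
      set w₀ := L (fun j => if b₀ = j then (1:ℝ) else 0) with hw₀
      have hfw₀ : u < f w₀ := hfK w₀ (hwK b₀)
      set t : ℝ := (f w₀ - u + 1) / (-g a) with ht
      have htpos : 0 ≤ t := by
        apply div_nonneg
        · linarith
        · linarith
      have hmem : w₀ + t • (fun j => if a = j then (1:ℝ) else 0) ∈ K := by
        have hzO : t • (fun j => if a = j then (1:ℝ) else 0) ∈ O := by
          intro j
          simp only [Pi.smul_apply, smul_eq_mul]
          positivity
        exact Set.add_mem_add ⟨_, hδ b₀, rfl⟩ hzO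
      have hlt := hfK _ hmem
      rw [map_add, map_smul, smul_eq_mul] at hlt
      have hfe : f (fun j => if a = j then (1:ℝ) else 0) = g a := rfl
      rw [hfe] at hlt
      have hga : g a ≠ 0 := ne_of_lt hneg
      have htg : t * g a = -(f w₀ - u + 1) := by
        rw [ht, div_mul_eq_mul_div, div_neg, mul_div_assoc, div_self hga, mul_one]
      linarith
    -- the sum of g is positive
    have hsum : 0 < ∑ a, g a := by
      rcases lt_or_eq_of_le (Finset.sum_nonneg fun a _ => hg0 a) with h | h
      · exact h
      · exfalso
        have hzero : ∀ a ∈ Finset.univ, g a = 0 :=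
          (Finset.sum_eq_zero_iff_of_nonneg fun a _ => hg0 a).mp h.symm
        have h1 : f (fun _ => c) = 0 := by
          rw [hfz]
          exact Finset.sum_eq_zero fun a _ => by rw [hzero a (Finset.mem_univ a), mul_zero]
        have h2 : f (L (fun j => if b₀ = j then (1:ℝ) else 0)) = 0 := by
          rw [hfz]
          exact Finset.sum_eq_zero fun a _ => by rw [hzero a (Finset.mem_univ a), mul_zero]
        have := hfK _ (hwK b₀)
        rw [h2] at this
        rw [h1] at hfc
        linarith
    refine ⟨fun a => g a / ∑ a', g a', ⟨fun a => div_nonneg (hg0 a) hsum.le, ?_⟩, ?_⟩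
    · rw [← Finset.sum_div, div_self (ne_of_gt hsum)]
    · intro b
      have h1 : u < ∑ a, B a b * g a := by
        have := hfK _ (hwK b)
        rwa [hLδ b, hfz] at this
      have h2 : c * ∑ a, g a < u := by
        have := hfc
        rw [hfz] at this
        rwa [Finset.mul_sum]
      rw [show (∑ a, (g a / ∑ a', g a') * B a b) = (∑ a, B a b * g a) / ∑ a', g a' by
        rw [Finset.sum_div]; exact Finset.sum_congr rfl fun a _ => by ring]
      rw [lt_div_iff₀ hsum]
      linarith


section helpers

variable {S₁ S₂ : Type*} [Fintype S₁] [Fintype S₂] [DecidableEq S₁] [DecidableEq S₂]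

lemma pureStrat_mem_mixed {S : Type*} [Fintype S] [DecidableEq S] (a : S) :
    pureStrat a ∈ mixed S := by
  constructor
  · intro b; unfold pureStrat; split <;> norm_num
  · simp [pureStrat]

lemma sum_extend {S : Type*} [Fintype S] (T : Set S) [Fintype ↥T] (g : S → ℝ)
    (hg : ∀ s ∉ T, g s = 0) : ∑ s, g s = ∑ t : ↥T, g ↑t := by
  classical
  rw [← Finset.sum_subset (Finset.subset_univ T.toFinset)
    (fun b _ hb => hg b (by simpa using hb))]
  exact Finset.sum_subtype T.toFinset (by simp) g

lemma payoff_pure_right (A : S₁ → S₂ → ℝ) (x : S₁ → ℝ) (b : S₂) :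
    payoff A x (pureStrat b) = ∑ a, x a * A a b := by
  unfold payoff pureStrat
  refine Finset.sum_congr rfl fun a _ => ?_
  simp [mul_ite]

lemma payoff_pure_left (A : S₁ → S₂ → ℝ) (a : S₁) (y : S₂ → ℝ) :
    payoff A (pureStrat a) y = ∑ b, A a b * y b := by
  unfold payoff pureStrat
  rw [Finset.sum_eq_single a]
  · simp
  · intro a' _ ha'; simp [ha']
  · intro h; exact absurd (Finset.mem_univ a) h

lemma payoff_sum_right (A : S₁ → S₂ → ℝ) (x : S₁ → ℝ) (y : S₂ → ℝ) :
    payoff A x y = ∑ b, payoff A x (pureStrat b) * y b := by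
  simp only [payoff_pure_right]
  show (∑ a, ∑ b, x a * A a b * y b) = _
  rw [Finset.sum_comm]
  exact Finset.sum_congr rfl fun b _ => (Finset.sum_mul _ _ _).symm

lemma payoff_sum_left (A : S₁ → S₂ → ℝ) (x : S₁ → ℝ) (y : S₂ → ℝ) :
    payoff A x y = ∑ a, x a * payoff A (pureStrat a) y := by
  simp only [payoff_pure_left]
  show (∑ a, ∑ b, x a * A a b * y b) = _
  refine Finset.sum_congr rfl fun a _ => ?_
  rw [Finset.mul_sum]
  exact Finset.sum_congr rfl fun b _ => by ring

lemma payoff_comb_left (A : S₁ → S₂ → ℝ) (x x' : S₁ → ℝ) (y : S₂ → ℝ) (s t : ℝ) :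
    payoff A (fun a => s * x a + t * x' a) y = s * payoff A x y + t * payoff A x' y := by
  unfold payoff
  rw [Finset.mul_sum, Finset.mul_sum, ← Finset.sum_add_distrib]
  refine Finset.sum_congr rfl fun a _ => ?_
  rw [Finset.mul_sum, Finset.mul_sum, ← Finset.sum_add_distrib]
  exact Finset.sum_congr rfl fun b _ => by ring

lemma payoff_comb_right (A : S₁ → S₂ → ℝ) (x : S₁ → ℝ) (y y' : S₂ → ℝ) (s t : ℝ) :
    payoff A x (fun b => s * y b + t * y' b) = s * payoff A x y + t * payoff A x y' := by
  unfold payoff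
  rw [Finset.mul_sum, Finset.mul_sum, ← Finset.sum_add_distrib]
  refine Finset.sum_congr rfl fun a _ => ?_
  rw [Finset.mul_sum, Finset.mul_sum, ← Finset.sum_add_distrib]
  exact Finset.sum_congr rfl fun b _ => by ring

variable [Nonempty S₁] [Nonempty S₂]

lemma inf'_le_payoff (A : S₁ → S₂ → ℝ) (x : S₁ → ℝ) {y : S₂ → ℝ} (hy : y ∈ mixed S₂) :
    (Finset.univ.inf' Finset.univ_nonempty fun b => payoff A x (pureStrat b))
      ≤ payoff A x y := by
  rw [payoff_sum_right]
  have h1 : (Finset.univ.inf' Finset.univ_nonempty fun b => payoff A x (pureStrat b))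
      = ∑ b, (Finset.univ.inf' Finset.univ_nonempty fun b => payoff A x (pureStrat b)) * y b := by
    rw [← Finset.mul_sum, hy.2, mul_one]
  rw [h1]
  exact Finset.sum_le_sum fun b _ =>
    mul_le_mul_of_nonneg_right (Finset.inf'_le _ (Finset.mem_univ b)) (hy.1 b)

lemma payoff_le_sup' (A : S₁ → S₂ → ℝ) {x : S₁ → ℝ} (hx : x ∈ mixed S₁) (y : S₂ → ℝ) :
    payoff A x y ≤ Finset.univ.sup' Finset.univ_nonempty fun a => payoff A (pureStrat a) y := by
  rw [payoff_sum_left]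
  have h1 : (Finset.univ.sup' Finset.univ_nonempty fun a => payoff A (pureStrat a) y)
      = ∑ a, x a * (Finset.univ.sup' Finset.univ_nonempty fun a => payoff A (pureStrat a) y) := by
    rw [← Finset.sum_mul, hx.2, one_mul]
  rw [h1]
  exact Finset.sum_le_sum fun a _ =>
    mul_le_mul_of_nonneg_left
      (Finset.le_sup' (fun a => payoff A (pureStrat a) y) (Finset.mem_univ a)) (hx.1 a)

lemma minVal_eq_inf' (A : S₁ → S₂ → ℝ) (x : S₁ → ℝ) :
    minVal A x = Finset.univ.inf' Finset.univ_nonempty fun b => payoff A x (pureStrat b) := by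
  apply le_antisymm
  · obtain ⟨b, -, hb⟩ := Finset.exists_mem_eq_inf' (Finset.univ_nonempty)
      (fun b => payoff A x (pureStrat b))
    rw [hb]
    exact csInf_le ⟨_, fun v ⟨y, hy, hvy⟩ => hvy ▸ inf'_le_payoff A x hy⟩
      ⟨pureStrat b, pureStrat_mem_mixed b, rfl⟩
  · exact le_csInf ⟨_, ⟨pureStrat (Classical.arbitrary S₂),
      pureStrat_mem_mixed _, rfl⟩⟩ fun v ⟨y, hy, hvy⟩ => hvy ▸ inf'_le_payoff A x hy

lemma maxVal_eq_sup' (A : S₁ → S₂ → ℝ) (y : S₂ → ℝ) :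
    maxVal A y = Finset.univ.sup' Finset.univ_nonempty fun a => payoff A (pureStrat a) y := by
  apply le_antisymm
  · refine csSup_le ⟨_, ⟨pureStrat (Classical.arbitrary S₁),
      pureStrat_mem_mixed _, rfl⟩⟩ ?_
    rintro v ⟨x, hx, rfl⟩
    exact payoff_le_sup' A hx y
  · obtain ⟨a, -, ha⟩ := Finset.exists_mem_eq_sup' (Finset.univ_nonempty)
      (fun a => payoff A (pureStrat a) y)
    rw [ha]
    refine le_csSup ⟨Finset.univ.sup' Finset.univ_nonempty fun a =>
      payoff A (pureStrat a) y, ?_⟩ ⟨pureStrat a, pureStrat_mem_mixed a, rfl⟩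
    rintro v ⟨x, hx, rfl⟩
    exact payoff_le_sup' A hx y

lemma minVal_le_payoff (A : S₁ → S₂ → ℝ) (x : S₁ → ℝ) {y : S₂ → ℝ} (hy : y ∈ mixed S₂) :
    minVal A x ≤ payoff A x y := by
  rw [minVal_eq_inf']; exact inf'_le_payoff A x hy

lemma payoff_le_maxVal (A : S₁ → S₂ → ℝ) {x : S₁ → ℝ} (hx : x ∈ mixed S₁) (y : S₂ → ℝ) :
    payoff A x y ≤ maxVal A y := by
  rw [maxVal_eq_sup']; exact payoff_le_sup' A hx y

end helpers


/-- best-response form of the ADO termination criterion. -/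
theorem ado_termination_best_response_form
    {S₁ S₂ : Type*} [Fintype S₁] [Fintype S₂] [Nonempty S₁] [Nonempty S₂]
    [DecidableEq S₁] [DecidableEq S₂]
    (A : S₁ → S₂ → ℝ)
    (T₁ : Set S₁) (T₂ : Set S₂) (hT₁ : T₁.Nonempty) (hT₂ : T₂.Nonempty)
    (xr : S₁ → ℝ) (yr : S₂ → ℝ)
    -- xr attains max_{x∈Δ(T₁)} min_{y∈Δ(S₂)} v(x,y)
    (hxr : xr ∈ mixedOn T₁) (hxrmax : ∀ x ∈ mixedOn T₁, minVal A x ≤ minVal A xr)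
    -- yr attains min_{y∈Δ(T₂)} max_{x∈Δ(S₁)} v(x,y)
    (hyr : yr ∈ mixedOn T₂) (hyrmin : ∀ y ∈ mixedOn T₂, maxVal A yr ≤ maxVal A y)
    -- every pure best response to yr lies in T₁
    (hbr1 : ∀ a : S₁, payoff A (pureStrat a) yr = maxVal A yr → a ∈ T₁)
    -- every pure best response to xr lies in T₂
    (hbr2 : ∀ b : S₂, payoff A xr (pureStrat b) = minVal A xr → b ∈ T₂) :
    (∀ x ∈ mixed S₁, payoff A x yr ≤ payoff A xr yr) ∧
      (∀ y ∈ mixed S₂, payoff A xr yr ≤ payoff A xr y) := by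
  classical
  have hne1 : (Finset.univ : Finset S₁).Nonempty := Finset.univ_nonempty
  have hne2 : (Finset.univ : Finset S₂).Nonempty := Finset.univ_nonempty
  set V₁ := minVal A xr with hV₁
  set V₂ := maxVal A yr with hV₂
  suffices hkey : V₂ ≤ V₁ by
    have h1 : V₁ ≤ payoff A xr yr := minVal_le_payoff A xr hyr.1
    have h2 : payoff A xr yr ≤ V₂ := payoff_le_maxVal A hxr.1 yr
    constructor
    · intro x hx
      have := payoff_le_maxVal A hx yr
      linarith
    · intro y hy
      have := minVal_le_payoff A xr hy
      linarith
  by_contra hcon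
  push_neg at hcon
  set c := (V₁ + V₂) / 2 with hcdef
  have hc1 : V₁ < c := by rw [hcdef]; linarith
  have hc2 : c < V₂ := by rw [hcdef]; linarith
  haveI : Fintype ↥T₁ := Fintype.ofFinite _
  haveI : Fintype ↥T₂ := Fintype.ofFinite _
  haveI : Nonempty ↥T₁ := hT₁.to_subtype
  haveI : Nonempty ↥T₂ := hT₂.to_subtype
  rcases minimax_dichotomy (fun (a : ↥T₁) (b : ↥T₂) => A ↑a ↑b) c with
    ⟨y, hy, hyc⟩ | ⟨x, hx, hxc⟩
  · -- Case 1: a strategy in Δ(T₂) capping all of T₁ at c; contradict optimality of yr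
    set ys : S₂ → ℝ := fun b => if h : b ∈ T₂ then y ⟨b, h⟩ else 0 with hys
    have hys0 : ∀ b ∉ T₂, ys b = 0 := fun b hb => dif_neg hb
    have hysval : ∀ b : ↥T₂, ys ↑b = y b := fun b => dif_pos b.2
    have hysmem : ys ∈ mixedOn T₂ := by
      refine ⟨⟨fun b => ?_, ?_⟩, hys0⟩
      · by_cases h : b ∈ T₂
        · simpa only [hys, dif_pos h] using hy.1 ⟨b, h⟩
        · rw [hys0 b h]
      · rw [sum_extend T₂ ys hys0]
        rw [show (∑ b : ↥T₂, ys ↑b) = ∑ b : ↥T₂, y b from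
          Finset.sum_congr rfl fun b _ => hysval b]
        exact hy.2
    have hpay : ∀ a ∈ T₁, payoff A (pureStrat a) ys ≤ c := by
      intro a ha
      rw [payoff_pure_left]
      have hz : ∀ b ∉ T₂, A a b * ys b = 0 := fun b hb => by rw [hys0 b hb, mul_zero]
      rw [sum_extend T₂ (fun b => A a b * ys b) hz]
      rw [show (∑ b : ↥T₂, A a ↑b * ys ↑b) = ∑ b : ↥T₂, A a ↑b * y b from
        Finset.sum_congr rfl fun b _ => by rw [hysval b]]
      exact hyc ⟨a, ha⟩
    set ε := Finset.univ.inf' hne1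
      (fun a => if a ∈ T₁ then 1 else V₂ - payoff A (pureStrat a) yr) with hε
    have hpureV₂ : ∀ a : S₁, payoff A (pureStrat a) yr ≤ V₂ :=
      fun a => payoff_le_maxVal A (pureStrat_mem_mixed a) yr
    have hεpos : 0 < ε := by
      rw [hε, Finset.lt_inf'_iff]
      intro a _
      by_cases ha : a ∈ T₁
      · rw [if_pos ha]; norm_num
      · rw [if_neg ha]
        have hlt : payoff A (pureStrat a) yr < V₂ :=
          lt_of_le_of_ne (hpureV₂ a) fun h => ha (hbr1 a h)
        linarith
    have hεle : ∀ a ∉ T₁, payoff A (pureStrat a) yr ≤ V₂ - ε := by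
      intro a ha
      have := Finset.inf'_le
        (fun a => if a ∈ T₁ then 1 else V₂ - payoff A (pureStrat a) yr) (Finset.mem_univ a)
      rw [if_neg ha] at this
      rw [← hε] at this
      linarith
    set M := Finset.univ.sup' hne1 (fun a => payoff A (pureStrat a) ys) with hM
    set Kc := max (M - (V₂ - ε)) 1 with hKc
    have hKcpos : (0:ℝ) < Kc := lt_of_lt_of_le one_pos (le_max_right _ _)
    have hKcge : M - (V₂ - ε) ≤ Kc := le_max_left _ _
    set t := min (1/2 : ℝ) (ε / (2 * Kc)) with htdef
    have ht0 : 0 < t := lt_min (by norm_num) (div_pos hεpos (by positivity))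
    have hthalf : t ≤ 1/2 := min_le_left _ _
    have htK : t * Kc ≤ ε / 2 := by
      have h1 : t ≤ ε / (2 * Kc) := min_le_right _ _
      have := mul_le_mul_of_nonneg_right h1 hKcpos.le
      calc t * Kc ≤ (ε / (2 * Kc)) * Kc := this
        _ = ε / 2 := by field_simp
    set yt : S₂ → ℝ := fun b => (1 - t) * yr b + t * ys b with hyt
    have hytmem : yt ∈ mixedOn T₂ := by
      refine ⟨⟨fun b => ?_, ?_⟩, fun b hb => ?_⟩
      · have := hyr.1.1 b
        have := hysmem.1.1 b
        show (0:ℝ) ≤ (1 - t) * yr b + t * ys b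
        nlinarith
      · show (∑ b, ((1 - t) * yr b + t * ys b)) = 1
        rw [Finset.sum_add_distrib, ← Finset.mul_sum, ← Finset.mul_sum,
          hyr.1.2, hysmem.1.2]
        ring
      · show (1 - t) * yr b + t * ys b = 0
        rw [hyr.2 b hb, hysmem.2 b hb]
        ring
    have hytlt : maxVal A yt < V₂ := by
      rw [maxVal_eq_sup', Finset.sup'_lt_iff]
      intro a _
      rw [hyt, payoff_comb_right]
      by_cases ha : a ∈ T₁
      · have h₁ := hpureV₂ a
        have h₂ := hpay a ha
        nlinarith
      · have h₁ := hεle a ha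
        have h₂ : payoff A (pureStrat a) ys ≤ M :=
          Finset.le_sup' (fun a => payoff A (pureStrat a) ys) (Finset.mem_univ a)
        nlinarith
    have := hyrmin yt hytmem
    linarith
  · -- Case 2: a strategy in Δ(T₁) beating c on all of T₂; contradict optimality of xr
    set xs : S₁ → ℝ := fun a => if h : a ∈ T₁ then x ⟨a, h⟩ else 0 with hxs
    have hxs0 : ∀ a ∉ T₁, xs a = 0 := fun a ha => dif_neg ha
    have hxsval : ∀ a : ↥T₁, xs ↑a = x a := fun a => dif_pos a.2
    have hxsmem : xs ∈ mixedOn T₁ := by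
      refine ⟨⟨fun a => ?_, ?_⟩, hxs0⟩
      · by_cases h : a ∈ T₁
        · simpa only [hxs, dif_pos h] using hx.1 ⟨a, h⟩
        · rw [hxs0 a h]
      · rw [sum_extend T₁ xs hxs0]
        rw [show (∑ a : ↥T₁, xs ↑a) = ∑ a : ↥T₁, x a from
          Finset.sum_congr rfl fun a _ => hxsval a]
        exact hx.2
    have hpay : ∀ b ∈ T₂, c < payoff A xs (pureStrat b) := by
      intro b hb
      rw [payoff_pure_right]
      have hz : ∀ a ∉ T₁, xs a * A a b = 0 := fun a ha => by rw [hxs0 a ha, zero_mul]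
      rw [sum_extend T₁ (fun a => xs a * A a b) hz]
      rw [show (∑ a : ↥T₁, xs ↑a * A ↑a b) = ∑ a : ↥T₁, x a * A ↑a b from
        Finset.sum_congr rfl fun a _ => by rw [hxsval a]]
      exact hxc ⟨b, hb⟩
    set δ := Finset.univ.inf' hne2
      (fun b => if b ∈ T₂ then 1 else payoff A xr (pureStrat b) - V₁) with hδ
    have hpureV₁ : ∀ b : S₂, V₁ ≤ payoff A xr (pureStrat b) :=
      fun b => minVal_le_payoff A xr (pureStrat_mem_mixed b)
    have hδpos : 0 < δ := by
      rw [hδ, Finset.lt_inf'_iff]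
      intro b _
      by_cases hb : b ∈ T₂
      · rw [if_pos hb]; norm_num
      · rw [if_neg hb]
        have hlt : V₁ < payoff A xr (pureStrat b) :=
          lt_of_le_of_ne (hpureV₁ b) fun h => hb (hbr2 b h.symm)
        linarith
    have hδle : ∀ b ∉ T₂, V₁ + δ ≤ payoff A xr (pureStrat b) := by
      intro b hb
      have := Finset.inf'_le
        (fun b => if b ∈ T₂ then 1 else payoff A xr (pureStrat b) - V₁) (Finset.mem_univ b)
      rw [if_neg hb] at this
      rw [← hδ] at this
      linarith
    set m := Finset.univ.inf' hne2 (fun b => payoff A xs (pureStrat b)) with hm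
    set Kc := max ((V₁ + δ) - m) 1 with hKc
    have hKcpos : (0:ℝ) < Kc := lt_of_lt_of_le one_pos (le_max_right _ _)
    have hKcge : (V₁ + δ) - m ≤ Kc := le_max_left _ _
    set t := min (1/2 : ℝ) (δ / (2 * Kc)) with htdef
    have ht0 : 0 < t := lt_min (by norm_num) (div_pos hδpos (by positivity))
    have hthalf : t ≤ 1/2 := min_le_left _ _
    have htK : t * Kc ≤ δ / 2 := by
      have h1 : t ≤ δ / (2 * Kc) := min_le_right _ _
      have := mul_le_mul_of_nonneg_right h1 hKcpos.le
      calc t * Kc ≤ (δ / (2 * Kc)) * Kc := this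
        _ = δ / 2 := by field_simp
    set xt : S₁ → ℝ := fun a => (1 - t) * xr a + t * xs a with hxt
    have hxtmem : xt ∈ mixedOn T₁ := by
      refine ⟨⟨fun a => ?_, ?_⟩, fun a ha => ?_⟩
      · have := hxr.1.1 a
        have := hxsmem.1.1 a
        show (0:ℝ) ≤ (1 - t) * xr a + t * xs a
        nlinarith
      · show (∑ a, ((1 - t) * xr a + t * xs a)) = 1
        rw [Finset.sum_add_distrib, ← Finset.mul_sum, ← Finset.mul_sum,
          hxr.1.2, hxsmem.1.2]
        ring
      · show (1 - t) * xr a + t * xs a = 0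
        rw [hxr.2 a ha, hxsmem.2 a ha]
        ring
    have hxtgt : V₁ < minVal A xt := by
      rw [minVal_eq_inf', Finset.lt_inf'_iff]
      intro b _
      rw [hxt, payoff_comb_left]
      by_cases hb : b ∈ T₂
      · have h₁ := hpureV₁ b
        have h₂ := hpay b hb
        nlinarith
      · have h₁ := hδle b hb
        have h₂ : m ≤ payoff A xs (pureStrat b) :=
          Finset.inf'_le (fun b => payoff A xs (pureStrat b)) (Finset.mem_univ b)
        nlinarith
    have := hxrmax xt hxtmem
    linarith
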